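/- The normalizing constant of the Boltzmann machine relaxation density satisfies log Z = log Z_b + (1/2)Tr(D) + (d/2)log(2π) − d_b log 2, where Z = ∫ exp(−φ(x)) dx with φ(x) = (1/2)x⊤x − Σ_{k=1}^{d_b} log cosh(q_k⊤ x + b_k). -/

import Mathlib

open Matrix Real Finset MeasureTheory

/-- Spin encoding of a Boolean configuration. -/
def spin {n : ℕ} (s : Fin n → Bool) : Fin n → ℝ := fun k => if s k then 1 else -1

lemma gauss_integrable (a : ℝ) :
    Integrable (fun t : ℝ => Real.exp (-(1/2) * t^2 + a * t)) := by
  have h : (fun t : ℝ => Real.exp (-(1/2) * t^2 + a * t))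
      = fun t => Real.exp (-(1/2) * (t - a)^2) * Real.exp (a^2/2) := by
    funext t
    rw [← Real.exp_add]
    congr 1
    ring
  rw [h]
  exact ((integrable_exp_neg_mul_sq (by norm_num : (0:ℝ) < 1/2)).comp_sub_right a).mul_const _

lemma gauss_eval (a : ℝ) :
    ∫ t : ℝ, Real.exp (-(1/2) * t^2 + a * t) = Real.sqrt (2 * π) * Real.exp (a^2/2) := by
  have h : (fun t : ℝ => Real.exp (-(1/2) * t^2 + a * t))
      = fun t => Real.exp (-(1/2) * (t - a)^2) * Real.exp (a^2/2) := by
    funext t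
    rw [← Real.exp_add]
    congr 1
    ring
  rw [h, integral_mul_const,
    integral_sub_right_eq_self (fun t : ℝ => Real.exp (-(1/2) * t^2)) a,
    integral_gaussian]
  congr 2
  rw [div_div_eq_mul_div, div_one, mul_comm]

lemma spin_sq {n : ℕ} (s : Fin n → Bool) (k : Fin n) : spin s k * spin s k = 1 := by
  by_cases h : s k <;> simp [spin, h]

lemma prod_exp_gauss {d : ℕ} (u x : Fin d → ℝ) :
    ∏ j, Real.exp (-(1/2) * (x j)^2 + u j * x j)
      = Real.exp (-(1/2 * (x ⬝ᵥ x)) + u ⬝ᵥ x) := by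
  rw [← Real.exp_sum]
  congr 1
  simp only [dotProduct, Finset.mul_sum, ← Finset.sum_neg_distrib,
    ← Finset.sum_add_distrib]
  exact Finset.sum_congr rfl fun j _ => by ring

lemma cosh_expand (y : ℝ) :
    Real.cosh y = ∑ t : Bool, (1/2) * Real.exp ((if t then (1:ℝ) else -1) * y) := by
  rw [Real.cosh_eq, Fintype.sum_bool, if_pos rfl, if_neg Bool.false_ne_true,
    one_mul, neg_one_mul]
  ring

/-- Pointwise expansion of the Boltzmann relaxation integrand. -/
lemma key_eq (db d : ℕ) (Q : Matrix (Fin db) (Fin d) ℝ) (b : Fin db → ℝ) (x : Fin d → ℝ) :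
    Real.exp (-((1/2) * (x ⬝ᵥ x) - ∑ k, Real.log (Real.cosh ((Q *ᵥ x) k + b k))))
      = ∑ s : Fin db → Bool, ((1/2)^db * Real.exp (spin s ⬝ᵥ b)) *
          ∏ j, Real.exp (-(1/2) * (x j)^2 + (spin s ᵥ* Q) j * x j) := by
  rw [neg_sub, sub_eq_add_neg, Real.exp_add, Real.exp_sum]
  rw [Finset.prod_congr rfl (fun k _ =>
    (Real.exp_log (Real.cosh_pos ((Q *ᵥ x) k + b k)) : _))]
  rw [Finset.prod_congr rfl (fun k _ => cosh_expand ((Q *ᵥ x) k + b k))]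
  rw [Finset.prod_univ_sum, Fintype.piFinset_univ, Finset.sum_mul]
  refine Finset.sum_congr rfl fun s _ => ?_
  rw [Finset.prod_mul_distrib, Finset.prod_const, Finset.card_univ, Fintype.card_fin]
  have hsp : ∀ k, (if s k = true then (1:ℝ) else -1) = spin s k := fun _ => rfl
  simp only [hsp]
  rw [← Real.exp_sum]
  have hsum : ∑ k, spin s k * ((Q *ᵥ x) k + b k) = (spin s ᵥ* Q) ⬝ᵥ x + spin s ⬝ᵥ b := by
    simp only [mul_add, Finset.sum_add_distrib]
    congr 1
    rw [← Matrix.dotProduct_mulVec]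
    rfl
  rw [hsum, prod_exp_gauss (spin s ᵥ* Q) x, Real.exp_add, Real.exp_add]
  ring

/-- The normalizing constant of the Boltzmann machine relaxation density
satisfies log Z = log Z_b + Tr(D)/2 + (d/2) log(2π) − d_b log 2. -/
theorem boltzmann_relaxation_log_normalizer
    (db d : ℕ) (W D : Matrix (Fin db) (Fin db) ℝ) (Q : Matrix (Fin db) (Fin d) ℝ)
    (b : Fin db → ℝ) (Zb Z : ℝ)
    (hW : W.IsSymm) (hD : ∃ dv, D = Matrix.diagonal dv)
    (hPSD : (W + D).PosSemidef)
    (hQ : Q * Qᵀ = W + D)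
    (hZb : Zb = ∑ s : Fin db → Bool,
      Real.exp ((1/2) * (spin s ⬝ᵥ (W *ᵥ spin s)) + spin s ⬝ᵥ b))
    (hInt : Integrable (fun x : Fin d → ℝ =>
      Real.exp (-((1/2) * (x ⬝ᵥ x) - ∑ k, Real.log (Real.cosh ((Q *ᵥ x) k + b k)))))
      )
    (hZ : Z = ∫ x : Fin d → ℝ,
      Real.exp (-((1/2) * (x ⬝ᵥ x) - ∑ k, Real.log (Real.cosh ((Q *ᵥ x) k + b k))))) :
    Real.log Z
      = Real.log Zb + D.trace / 2 + ((d : ℝ) / 2) * Real.log (2 * π)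
        - (db : ℝ) * Real.log 2 := by
  obtain ⟨dv, rfl⟩ := hD
  -- integrability of each summand
  have hgint : ∀ s : Fin db → Bool,
      Integrable (fun x : Fin d → ℝ =>
        ∏ j, Real.exp (-(1/2) * (x j)^2 + (spin s ᵥ* Q) j * x j)) := by
    intro s
    exact Integrable.fintype_prod_dep (fun j => gauss_integrable ((spin s ᵥ* Q) j))
  -- evaluate each gaussian integral
  have hgval : ∀ s : Fin db → Bool,
      ∫ x : Fin d → ℝ, ∏ j, Real.exp (-(1/2) * (x j)^2 + (spin s ᵥ* Q) j * x j)
        = Real.sqrt (2 * π) ^ d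
            * Real.exp (((spin s ᵥ* Q) ⬝ᵥ (spin s ᵥ* Q)) / 2) := by
    intro s
    rw [MeasureTheory.integral_fintype_prod_volume_eq_prod
      (fun j t => Real.exp (-(1/2) * t^2 + (spin s ᵥ* Q) j * t))]
    rw [Finset.prod_congr rfl (fun j _ => gauss_eval ((spin s ᵥ* Q) j)),
      Finset.prod_mul_distrib, Finset.prod_const, ← Real.exp_sum,
      Finset.card_univ, Fintype.card_fin]
    have h : ∑ j, ((spin s ᵥ* Q) j)^2/2 = ((spin s ᵥ* Q) ⬝ᵥ (spin s ᵥ* Q)) / 2 := by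
      rw [dotProduct, Finset.sum_div]
      exact Finset.sum_congr rfl fun j _ => by rw [sq]
    rw [h]
  -- quadratic form identity
  have hquad : ∀ s : Fin db → Bool,
      (spin s ᵥ* Q) ⬝ᵥ (spin s ᵥ* Q) = spin s ⬝ᵥ (W *ᵥ spin s) + ∑ k, dv k := by
    intro s
    calc (spin s ᵥ* Q) ⬝ᵥ (spin s ᵥ* Q)
        = (spin s ᵥ* Q) ⬝ᵥ (Qᵀ *ᵥ spin s) := by rw [Matrix.mulVec_transpose]
      _ = ((spin s ᵥ* Q) ᵥ* Qᵀ) ⬝ᵥ spin s := Matrix.dotProduct_mulVec _ _ _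
      _ = (spin s ᵥ* (Q * Qᵀ)) ⬝ᵥ spin s := by rw [Matrix.vecMul_vecMul]
      _ = spin s ⬝ᵥ ((W + Matrix.diagonal dv) *ᵥ spin s) := by
          rw [hQ, ← Matrix.dotProduct_mulVec]
      _ = spin s ⬝ᵥ (W *ᵥ spin s) + spin s ⬝ᵥ (Matrix.diagonal dv *ᵥ spin s) := by
          rw [Matrix.add_mulVec, dotProduct_add]
      _ = spin s ⬝ᵥ (W *ᵥ spin s) + ∑ k, dv k := by
          congr 1
          rw [dotProduct]
          refine Finset.sum_congr rfl fun k _ => ?_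
          rw [Matrix.mulVec_diagonal, mul_comm (dv k) (spin s k), ← mul_assoc,
            spin_sq, one_mul]
  -- compute Z
  have hZcalc : Z = ((1/2)^db * Real.sqrt (2 * π) ^ d * Real.exp ((∑ k, dv k) / 2)) * Zb := by
    rw [hZ]
    calc ∫ x : Fin d → ℝ,
          Real.exp (-((1/2) * (x ⬝ᵥ x) - ∑ k, Real.log (Real.cosh ((Q *ᵥ x) k + b k))))
        = ∫ x : Fin d → ℝ, ∑ s : Fin db → Bool, ((1/2)^db * Real.exp (spin s ⬝ᵥ b)) *
            ∏ j, Real.exp (-(1/2) * (x j)^2 + (spin s ᵥ* Q) j * x j) := by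
          exact integral_congr_ae (Filter.Eventually.of_forall (key_eq db d Q b))
      _ = ∑ s : Fin db → Bool, ∫ x : Fin d → ℝ, ((1/2)^db * Real.exp (spin s ⬝ᵥ b)) *
            ∏ j, Real.exp (-(1/2) * (x j)^2 + (spin s ᵥ* Q) j * x j) := by
          exact integral_finset_sum _ (fun s _ => ((hgint s).const_mul _))
      _ = ((1/2)^db * Real.sqrt (2 * π) ^ d * Real.exp ((∑ k, dv k) / 2)) * Zb := by
          rw [hZb, Finset.mul_sum]
          refine Finset.sum_congr rfl fun s _ => ?_
          rw [integral_const_mul, hgval s, hquad s]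
          have e1 : (spin s ⬝ᵥ (W *ᵥ spin s) + ∑ k, dv k) / 2
              = spin s ⬝ᵥ (W *ᵥ spin s) / 2 + (∑ k, dv k) / 2 := by ring
          have e2 : (1/2) * (spin s ⬝ᵥ (W *ᵥ spin s)) + spin s ⬝ᵥ b
              = spin s ⬝ᵥ (W *ᵥ spin s) / 2 + spin s ⬝ᵥ b := by ring
          rw [e1, e2, Real.exp_add, Real.exp_add]
          ring
  -- positivity facts
  have hZbpos : 0 < Zb := by
    rw [hZb]
    exact Finset.sum_pos (fun s _ => Real.exp_pos _) ⟨fun _ => true, Finset.mem_univ _⟩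
  have htrace : (Matrix.diagonal dv).trace = ∑ k, dv k := Matrix.trace_diagonal dv
  rw [hZcalc, Real.log_mul (by positivity) (ne_of_gt hZbpos),
    Real.log_mul (by positivity) (by positivity),
    Real.log_mul (by positivity) (by positivity),
    Real.log_exp, Real.log_pow, Real.log_pow, htrace,
    Real.log_sqrt (by positivity), one_div, Real.log_inv]
  ring
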